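/- Let α, β ∈ ℝ, let p : S × A → ℝ satisfy p(s,a) > 0 for all (s,a), and let u : S × A → ℝ be arbitrary. Define G(η) = Σ_{s,a} (p(s,a) + η u(s,a)) r(s,a) − α Σ_{s,a} (p(s,a) + η u(s,a)) log (p(s,a) + η u(s,a)) − (β − α) Σ_{s,a} (p(s,a) + η u(s,a)) log ( Σ_b (p(s,b) + η u(s,b)) ) for η in a neighborhood of 0 where all the arguments of the logarithms are positive. Then G is twice differentiable at η = 0 and G''(0) = −α Σ_s ( Σ_a u(s,a)²/p(s,a) − (Σ_a u(s,a))²/(Σ_a p(s,a)) ) − β Σ_s (Σ_a u(s,a))²/(Σ_a p(s,a)). -/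

import Mathlib

open Finset Filter

private lemma lin_hasDerivAt (c d η : ℝ) : HasDerivAt (fun x : ℝ => c + x * d) d η := by
  simpa using ((hasDerivAt_id η).mul_const d).const_add c

private lemma phi_hasDerivAt (c d η : ℝ) (h : 0 < c + η * d) :
    HasDerivAt (fun x : ℝ => (c + x * d) * Real.log (c + x * d))
      (d * (Real.log (c + η * d) + 1)) η := by
  have h1 := lin_hasDerivAt c d η
  have h2 : HasDerivAt (fun x : ℝ => Real.log (c + x * d)) ((c + η * d)⁻¹ * d) η := by
    have h2' := (Real.hasDerivAt_log h.ne').comp η h1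
    exact h2'
  have h3 := h1.mul h2
  refine h3.congr_deriv ?_
  rw [← mul_assoc, mul_inv_cancel₀ h.ne']
  ring

private lemma psi_hasDerivAt (c d η : ℝ) (h : 0 < c + η * d) :
    HasDerivAt (fun x : ℝ => d * (Real.log (c + x * d) + 1))
      (d * (d / (c + η * d))) η := by
  have h2 : HasDerivAt (fun x : ℝ => Real.log (c + x * d)) ((c + η * d)⁻¹ * d) η := by
    have h2' := (Real.hasDerivAt_log h.ne').comp η (lin_hasDerivAt c d η)
    exact h2'
  have := (h2.add_const 1).const_mul d
  refine this.congr_deriv ?_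
  rw [div_eq_inv_mul]

theorem second_directional_derivative {S A : Type} [Fintype S] [Fintype A]
    [Nonempty S] [Nonempty A]
    (r : S → A → ℝ) (α β : ℝ)
    (p u : S → A → ℝ) (hp : ∀ s a, 0 < p s a)
    (G : ℝ → ℝ)
    (hG : ∀ η : ℝ, G η =
      (∑ s, ∑ a, (p s a + η * u s a) * r s a)
        - α * ∑ s, ∑ a, (p s a + η * u s a) * Real.log (p s a + η * u s a)
        - (β - α) * ∑ s, ∑ a, (p s a + η * u s a) *
            Real.log (∑ b, (p s b + η * u s b))) :
    (DifferentiableAt ℝ G 0 ∧ DifferentiableAt ℝ (deriv G) 0) ∧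
      deriv (deriv G) 0 =
        -α * (∑ s, ((∑ a, (u s a) ^ 2 / p s a)
            - (∑ a, u s a) ^ 2 / (∑ a, p s a)))
          - β * ∑ s, (∑ a, u s a) ^ 2 / (∑ a, p s a) := by
  set P : S → ℝ := fun s => ∑ a, p s a with hP
  set U : S → ℝ := fun s => ∑ a, u s a with hU
  have hPpos : ∀ s, 0 < P s := fun s => Finset.sum_pos (fun a _ => hp s a) univ_nonempty
  -- rewrite G in a cleaner form
  have hG' : ∀ η : ℝ, G η =
      (∑ s, ∑ a, (p s a + η * u s a) * r s a)
        - α * ∑ s, ∑ a, (p s a + η * u s a) * Real.log (p s a + η * u s a)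
        - (β - α) * ∑ s, (P s + η * U s) * Real.log (P s + η * U s) := by
    intro η
    rw [hG]
    congr 2
    apply Finset.sum_congr rfl
    intro s _
    have hs : ∑ b, (p s b + η * u s b) = P s + η * U s := by
      rw [Finset.sum_add_distrib, ← Finset.mul_sum]
    rw [← Finset.sum_mul, hs]
  -- eventual positivity near 0
  have hnb : ∀ᶠ η in nhds (0:ℝ),
      (∀ s a, 0 < p s a + η * u s a) ∧ (∀ s, 0 < P s + η * U s) := by
    have h1 : ∀ s a, ∀ᶠ η in nhds (0:ℝ), 0 < p s a + η * u s a := by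
      intro s a
      have hc : Filter.Tendsto (fun η : ℝ => p s a + η * u s a) (nhds 0) (nhds (p s a)) := by
        have : Continuous (fun η : ℝ => p s a + η * u s a) := by continuity
        simpa using this.tendsto 0
      exact hc.eventually (eventually_gt_nhds (hp s a))
    have h2 : ∀ s, ∀ᶠ η in nhds (0:ℝ), 0 < P s + η * U s := by
      intro s
      have hc : Filter.Tendsto (fun η : ℝ => P s + η * U s) (nhds 0) (nhds (P s)) := by
        have : Continuous (fun η : ℝ => P s + η * U s) := by continuity
        simpa using this.tendsto 0
      exact hc.eventually (eventually_gt_nhds (hPpos s))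
    exact (eventually_all.2 fun s => eventually_all.2 fun a => h1 s a).and
      (eventually_all.2 h2)
  -- first derivative
  set g : ℝ → ℝ := fun η =>
    (∑ s, ∑ a, u s a * r s a)
      - α * ∑ s, ∑ a, u s a * (Real.log (p s a + η * u s a) + 1)
      - (β - α) * ∑ s, U s * (Real.log (P s + η * U s) + 1) with hg
  have hDG : ∀ η : ℝ, (∀ s a, 0 < p s a + η * u s a) → (∀ s, 0 < P s + η * U s) →
      HasDerivAt G (g η) η := by
    intro η h1 h2
    have key : HasDerivAt (fun x : ℝ =>
        (∑ s, ∑ a, (p s a + x * u s a) * r s a)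
          - α * ∑ s, ∑ a, (p s a + x * u s a) * Real.log (p s a + x * u s a)
          - (β - α) * ∑ s, (P s + x * U s) * Real.log (P s + x * U s)) (g η) η := by
      apply HasDerivAt.sub
      apply HasDerivAt.sub
      · exact HasDerivAt.fun_sum fun s _ => HasDerivAt.fun_sum fun a _ =>
          (lin_hasDerivAt (p s a) (u s a) η).mul_const (r s a)
      · exact (HasDerivAt.fun_sum fun s _ => HasDerivAt.fun_sum fun a _ =>
          phi_hasDerivAt (p s a) (u s a) η (h1 s a)).const_mul α
      · exact (HasDerivAt.fun_sum fun s _ =>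
          phi_hasDerivAt (P s) (U s) η (h2 s)).const_mul (β - α)
    have : G = fun x : ℝ =>
        (∑ s, ∑ a, (p s a + x * u s a) * r s a)
          - α * ∑ s, ∑ a, (p s a + x * u s a) * Real.log (p s a + x * u s a)
          - (β - α) * ∑ s, (P s + x * U s) * Real.log (P s + x * U s) :=
      funext hG'
    rw [this]
    exact key
  have hDG0 : HasDerivAt G (g 0) 0 := by
    refine hDG 0 (fun s a => by simpa using hp s a) (fun s => by simpa using hPpos s)
  -- second derivative of g at 0
  set D : ℝ := -α * ∑ s, ∑ a, u s a * (u s a / p s a)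
      - (β - α) * ∑ s, U s * (U s / P s) with hD
  have hDg0 : HasDerivAt g D 0 := by
    have key : HasDerivAt g
        (0 - α * ∑ s, ∑ a, u s a * (u s a / (p s a + 0 * u s a))
          - (β - α) * ∑ s, U s * (U s / (P s + 0 * U s))) 0 := by
      apply HasDerivAt.sub
      apply HasDerivAt.sub
      · exact hasDerivAt_const 0 _
      · exact (HasDerivAt.fun_sum fun s _ => HasDerivAt.fun_sum fun a _ =>
          psi_hasDerivAt (p s a) (u s a) 0 (by simpa using hp s a)).const_mul α
      · exact (HasDerivAt.fun_sum fun s _ =>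
          psi_hasDerivAt (P s) (U s) 0 (by simpa using hPpos s)).const_mul (β - α)
    convert key using 1
    rw [hD]
    simp only [zero_mul, add_zero, zero_sub]
    ring
  -- deriv G agrees with g near 0
  have hEq : deriv G =ᶠ[nhds (0:ℝ)] g := by
    filter_upwards [hnb] with η hη
    exact (hDG η hη.1 hη.2).deriv
  refine ⟨⟨hDG0.differentiableAt, ?_⟩, ?_⟩
  · exact hEq.differentiableAt_iff.mpr hDg0.differentiableAt
  · rw [hEq.deriv_eq, hDg0.deriv]
    have hterm : ∀ s, ∑ a, u s a * (u s a / p s a) = ∑ a, (u s a) ^ 2 / p s a := by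
      intro s; apply Finset.sum_congr rfl; intro a _; rw [pow_two, mul_div_assoc]
    have hterm2 : ∀ s, U s * (U s / P s) = (U s) ^ 2 / P s := by
      intro s; rw [pow_two, mul_div_assoc]
    rw [hD]
    simp only [hterm, hterm2]
    rw [Finset.sum_sub_distrib]
    ring
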